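/- Let Ω ⊆ ℝ_t × ℝ_x be open and let H > 0, F^∥_e, F^⊥_e, F^⊥_f, U^∥, U^⊥, Π^∥_e, Π^⊥_e, 𝒱, 𝒵, c > 0, E : Ω → ℝ be C¹ functions satisfying (with δ ranging over {∥, ⊥} and F^∥_f ≡ 0): ∂_t H + ∂_x(H U^∥) = 0; ∂_t(H F^δ_e) + ∂_x(H U^∥ F^δ_e − E U^δ) = 0; ∂_t(H F^⊥_f) + ∂_x(H U^∥ F^⊥_f) = 0; ∂_t(H U^δ) + ∂_x(H U^∥ U^δ + E Π^δ_e) = 0; ∂_t(H Π^δ_e / c²) + ∂_x(H U^∥ Π^δ_e / c² + E U^δ) = 0; ∂_t(H 𝒱) + ∂_x(H U^∥ 𝒱 + E 𝒵) = 0; ∂_t(H 𝒵 / c²) + ∂_x(H U^∥ 𝒵 / c² + E 𝒱) = 0; ∂_t(H c²) + ∂_x(H U^∥ c²) = 0; ∂_t(H E) + ∂_x(H U^∥ E) = 0; together with the pointwise constraints E · F^⊥_f = 1 and 𝒱 = U^∥ · F^⊥_f on Ω. Then each of the quantities c², E, F^⊥_f, F^∥_e + Π^∥_e / c², F^⊥_e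 + Π^⊥_e / c², and H⁻¹ + 𝒵 / c² is transported at velocity U^∥, i.e. satisfies ∂_t w + U^∥ ∂_x w = 0 on Ω. -/

import Mathlib

/-- Partial derivative `∂_t f` of a field on `ℝ_t × ℝ_x`. -/
noncomputable def dt (f : ℝ × ℝ → ℝ) (x : ℝ × ℝ) : ℝ := fderiv ℝ f x (1, 0)

/-- Partial derivative `∂_x f` of a field on `ℝ_t × ℝ_x`. -/
noncomputable def dx (f : ℝ × ℝ → ℝ) (x : ℝ × ℝ) : ℝ := fderiv ℝ f x (0, 1)

section SVMhelpers
variable {f g H U w : ℝ × ℝ → ℝ} {x v : ℝ × ℝ}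

lemma SVM.D_mul (hf : DifferentiableAt ℝ f x) (hg : DifferentiableAt ℝ g x) :
    fderiv ℝ (fun y => f y * g y) x v
      = fderiv ℝ f x v * g x + f x * fderiv ℝ g x v := by
  rw [fderiv_fun_mul hf hg]
  simp only [ContinuousLinearMap.add_apply, ContinuousLinearMap.smul_apply, smul_eq_mul]
  ring

lemma SVM.D_add (hf : DifferentiableAt ℝ f x) (hg : DifferentiableAt ℝ g x) :
    fderiv ℝ (fun y => f y + g y) x v = fderiv ℝ f x v + fderiv ℝ g x v := by
  rw [fderiv_fun_add hf hg]; simp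

lemma SVM.D_sub (hf : DifferentiableAt ℝ f x) (hg : DifferentiableAt ℝ g x) :
    fderiv ℝ (fun y => f y - g y) x v = fderiv ℝ f x v - fderiv ℝ g x v := by
  rw [fderiv_fun_sub hf hg]; simp

lemma SVM.D_inv (hf : DifferentiableAt ℝ f x) (h0 : f x ≠ 0) :
    fderiv ℝ (fun y => (f y)⁻¹) x v = -(fderiv ℝ f x v) / f x ^ 2 := by
  have hne : ∀ᶠ y in nhds x, f y ≠ 0 := hf.continuousAt.eventually_ne h0
  have heq : (fun y => f y * (f y)⁻¹) =ᶠ[nhds x] (fun _ => (1:ℝ)) :=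
    hne.mono fun y hy => mul_inv_cancel₀ hy
  have hz : fderiv ℝ (fun y => f y * (f y)⁻¹) x v = 0 := by
    rw [heq.fderiv_eq]; simp
  have h2 := SVM.D_mul (v := v) hf (hf.fun_inv h0)
  rw [hz] at h2
  have hpow : f x ^ 2 ≠ 0 := pow_ne_zero 2 h0
  rw [eq_div_iff hpow]
  linear_combination (-(f x)) * h2 + (-(fderiv ℝ f x v)) * mul_inv_cancel₀ h0

lemma SVM.transport_id (hH : DifferentiableAt ℝ H x) (hU : DifferentiableAt ℝ U x)
    (hw : DifferentiableAt ℝ w x)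
    (e1 : fderiv ℝ H x ((1:ℝ), (0:ℝ)) + fderiv ℝ (fun y => H y * U y) x ((0:ℝ), (1:ℝ)) = 0) :
    fderiv ℝ (fun y => H y * w y) x ((1:ℝ), (0:ℝ))
      + fderiv ℝ (fun y => H y * U y * w y) x ((0:ℝ), (1:ℝ))
      = H x * (fderiv ℝ w x ((1:ℝ), (0:ℝ)) + U x * fderiv ℝ w x ((0:ℝ), (1:ℝ))) := by
  rw [SVM.D_mul hH hw, SVM.D_mul (hH.fun_mul hU) hw, SVM.D_mul hH hU]
  rw [SVM.D_mul hH hU] at e1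
  linear_combination (w x) * e1

end SVMhelpers

theorem svm_relaxed_solver_riemann_invariants (Ω : Set (ℝ × ℝ)) (hΩ : IsOpen Ω)
    (H Ff V Z c E : ℝ × ℝ → ℝ)
    (Fe Uv Pi' : Fin 2 → ℝ × ℝ → ℝ)
    (hHpos : ∀ x ∈ Ω, 0 < H x) (hcpos : ∀ x ∈ Ω, 0 < c x)
    (hreg : ∀ x ∈ Ω, DifferentiableAt ℝ H x ∧ DifferentiableAt ℝ Ff x ∧
      DifferentiableAt ℝ V x ∧ DifferentiableAt ℝ Z x ∧ DifferentiableAt ℝ c x ∧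
      DifferentiableAt ℝ E x ∧
      (∀ δ, DifferentiableAt ℝ (Fe δ) x ∧ DifferentiableAt ℝ (Uv δ) x ∧
        DifferentiableAt ℝ (Pi' δ) x))
    (h1 : ∀ x ∈ Ω, dt H x + dx (fun y => H y * Uv 0 y) x = 0)
    (h2 : ∀ δ, ∀ x ∈ Ω, dt (fun y => H y * Fe δ y) x
      + dx (fun y => H y * Uv 0 y * Fe δ y - E y * Uv δ y) x = 0)
    (h3 : ∀ x ∈ Ω, dt (fun y => H y * Ff y) x
      + dx (fun y => H y * Uv 0 y * Ff y) x = 0)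
    (h4 : ∀ δ, ∀ x ∈ Ω, dt (fun y => H y * Uv δ y) x
      + dx (fun y => H y * Uv 0 y * Uv δ y + E y * Pi' δ y) x = 0)
    (h5 : ∀ δ, ∀ x ∈ Ω, dt (fun y => H y * Pi' δ y / (c y) ^ 2) x
      + dx (fun y => H y * Uv 0 y * Pi' δ y / (c y) ^ 2 + E y * Uv δ y) x = 0)
    (h6 : ∀ x ∈ Ω, dt (fun y => H y * V y) x
      + dx (fun y => H y * Uv 0 y * V y + E y * Z y) x = 0)
    (h7 : ∀ x ∈ Ω, dt (fun y => H y * Z y / (c y) ^ 2) x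
      + dx (fun y => H y * Uv 0 y * Z y / (c y) ^ 2 + E y * V y) x = 0)
    (h8 : ∀ x ∈ Ω, dt (fun y => H y * (c y) ^ 2) x
      + dx (fun y => H y * Uv 0 y * (c y) ^ 2) x = 0)
    (h9 : ∀ x ∈ Ω, dt (fun y => H y * E y) x
      + dx (fun y => H y * Uv 0 y * E y) x = 0)
    (hcon1 : ∀ x ∈ Ω, E x * Ff x = 1)
    (hcon2 : ∀ x ∈ Ω, V x = Uv 0 x * Ff x) :
    (∀ x ∈ Ω, dt (fun y => (c y) ^ 2) x + Uv 0 x * dx (fun y => (c y) ^ 2) x = 0) ∧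
    (∀ x ∈ Ω, dt E x + Uv 0 x * dx E x = 0) ∧
    (∀ x ∈ Ω, dt Ff x + Uv 0 x * dx Ff x = 0) ∧
    (∀ δ, ∀ x ∈ Ω, dt (fun y => Fe δ y + Pi' δ y / (c y) ^ 2) x
      + Uv 0 x * dx (fun y => Fe δ y + Pi' δ y / (c y) ^ 2) x = 0) ∧
    (∀ x ∈ Ω, dt (fun y => (H y)⁻¹ + Z y / (c y) ^ 2) x
      + Uv 0 x * dx (fun y => (H y)⁻¹ + Z y / (c y) ^ 2) x = 0) := by
  refine ⟨?_, ?_, ?_, ?_, ?_⟩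
  · -- c²
    intro x hx
    obtain ⟨dH, dFf, dV, dZ, dc, dE, dδ⟩ := hreg x hx
    have dU := (dδ 0).2.1
    have hHne : H x ≠ 0 := (hHpos x hx).ne'
    have e1 := h1 x hx; simp only [dt, dx] at e1
    have e8 := h8 x hx; simp only [dt, dx] at e8 ⊢
    have hT : H x * (fderiv ℝ (fun y => (c y) ^ 2) x ((1:ℝ),(0:ℝ))
        + Uv 0 x * fderiv ℝ (fun y => (c y) ^ 2) x ((0:ℝ),(1:ℝ))) = 0 := by
      linear_combination e8 - SVM.transport_id dH dU (dc.pow 2) e1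
    exact (mul_eq_zero.mp hT).resolve_left hHne
  · -- E
    intro x hx
    obtain ⟨dH, dFf, dV, dZ, dc, dE, dδ⟩ := hreg x hx
    have dU := (dδ 0).2.1
    have hHne : H x ≠ 0 := (hHpos x hx).ne'
    have e1 := h1 x hx; simp only [dt, dx] at e1
    have e9 := h9 x hx; simp only [dt, dx] at e9 ⊢
    have hT : H x * (fderiv ℝ E x ((1:ℝ),(0:ℝ))
        + Uv 0 x * fderiv ℝ E x ((0:ℝ),(1:ℝ))) = 0 := by
      linear_combination e9 - SVM.transport_id dH dU dE e1
    exact (mul_eq_zero.mp hT).resolve_left hHne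
  · -- Ff
    intro x hx
    obtain ⟨dH, dFf, dV, dZ, dc, dE, dδ⟩ := hreg x hx
    have dU := (dδ 0).2.1
    have hHne : H x ≠ 0 := (hHpos x hx).ne'
    have e1 := h1 x hx; simp only [dt, dx] at e1
    have e3 := h3 x hx; simp only [dt, dx] at e3 ⊢
    have hT : H x * (fderiv ℝ Ff x ((1:ℝ),(0:ℝ))
        + Uv 0 x * fderiv ℝ Ff x ((0:ℝ),(1:ℝ))) = 0 := by
      linear_combination e3 - SVM.transport_id dH dU dFf e1
    exact (mul_eq_zero.mp hT).resolve_left hHne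
  · -- Fe δ + Π δ / c²
    intro δ x hx
    obtain ⟨dH, dFf, dV, dZ, dc, dE, dδ⟩ := hreg x hx
    have dU := (dδ 0).2.1
    obtain ⟨dFe, dUδ, dPi⟩ := dδ δ
    have hHne : H x ≠ 0 := (hHpos x hx).ne'
    have hc2 : (c x) ^ 2 ≠ 0 := pow_ne_zero 2 (hcpos x hx).ne'
    have dcsq : DifferentiableAt ℝ (fun y => (c y) ^ 2) x := dc.pow 2
    have dPc : DifferentiableAt ℝ (fun y => Pi' δ y / (c y) ^ 2) x :=
      by simp only [div_eq_mul_inv]; exact dPi.mul (dcsq.inv hc2)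
    have e1 := h1 x hx; simp only [dt, dx] at e1
    have e2 := h2 δ x hx; simp only [dt, dx] at e2
    rw [SVM.D_sub ((dH.fun_mul dU).fun_mul dFe) (dE.fun_mul dUδ)] at e2
    have e5 := h5 δ x hx; simp only [dt, dx, mul_div_assoc] at e5
    rw [SVM.D_add ((dH.fun_mul dU).fun_mul dPc) (dE.fun_mul dUδ)] at e5
    have hT : H x * ((fderiv ℝ (Fe δ) x ((1:ℝ),(0:ℝ))
          + Uv 0 x * fderiv ℝ (Fe δ) x ((0:ℝ),(1:ℝ)))
        + (fderiv ℝ (fun y => Pi' δ y / (c y) ^ 2) x ((1:ℝ),(0:ℝ))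
          + Uv 0 x * fderiv ℝ (fun y => Pi' δ y / (c y) ^ 2) x ((0:ℝ),(1:ℝ)))) = 0 := by
      linear_combination e2 + e5 - SVM.transport_id dH dU dFe e1
        - SVM.transport_id dH dU dPc e1
    have hT' := (mul_eq_zero.mp hT).resolve_left hHne
    simp only [dt, dx]
    rw [SVM.D_add (v := ((1:ℝ),(0:ℝ))) dFe dPc, SVM.D_add (v := ((0:ℝ),(1:ℝ))) dFe dPc]
    linear_combination hT'
  · -- H⁻¹ + Z / c²
    intro x hx
    obtain ⟨dH, dFf, dV, dZ, dc, dE, dδ⟩ := hreg x hx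
    have dU := (dδ 0).2.1
    have hHne : H x ≠ 0 := (hHpos x hx).ne'
    have hc2 : (c x) ^ 2 ≠ 0 := pow_ne_zero 2 (hcpos x hx).ne'
    have dcsq : DifferentiableAt ℝ (fun y => (c y) ^ 2) x := dc.pow 2
    have dZc : DifferentiableAt ℝ (fun y => Z y / (c y) ^ 2) x :=
      by simp only [div_eq_mul_inv]; exact dZ.mul (dcsq.inv hc2)
    have dHinv : DifferentiableAt ℝ (fun y => (H y)⁻¹) x := dH.inv hHne
    have e1 := h1 x hx; simp only [dt, dx] at e1
    have e7 := h7 x hx; simp only [dt, dx, mul_div_assoc] at e7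
    rw [SVM.D_add ((dH.fun_mul dU).fun_mul dZc) (dE.fun_mul dV)] at e7
    have heq : (fun y => E y * V y) =ᶠ[nhds x] Uv 0 := by
      filter_upwards [hΩ.mem_nhds hx] with y hy
      rw [hcon2 y hy]
      linear_combination Uv 0 y * hcon1 y hy
    have hEVx : fderiv ℝ (fun y => E y * V y) x ((0:ℝ),(1:ℝ))
        = fderiv ℝ (Uv 0) x ((0:ℝ),(1:ℝ)) := by rw [heq.fderiv_eq]
    have hZT : H x * (fderiv ℝ (fun y => Z y / (c y) ^ 2) x ((1:ℝ),(0:ℝ))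
          + Uv 0 x * fderiv ℝ (fun y => Z y / (c y) ^ 2) x ((0:ℝ),(1:ℝ)))
        + fderiv ℝ (Uv 0) x ((0:ℝ),(1:ℝ)) = 0 := by
      linear_combination e7 - SVM.transport_id dH dU dZc e1 - hEVx
    rw [SVM.D_mul dH dU] at e1
    simp only [dt, dx]
    rw [SVM.D_add (v := ((1:ℝ),(0:ℝ))) dHinv dZc, SVM.D_add (v := ((0:ℝ),(1:ℝ))) dHinv dZc,
      SVM.D_inv (v := ((1:ℝ),(0:ℝ))) dH hHne, SVM.D_inv (v := ((0:ℝ),(1:ℝ))) dH hHne]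
    linear_combination (-((H x)⁻¹ ^ 2)) * e1 + (H x)⁻¹ * hZT
      - (fderiv ℝ (fun y => Z y / (c y) ^ 2) x ((1:ℝ),(0:ℝ))
          + Uv 0 x * fderiv ℝ (fun y => Z y / (c y) ^ 2) x ((0:ℝ),(1:ℝ))
          - (H x)⁻¹ * fderiv ℝ (Uv 0) x ((0:ℝ),(1:ℝ))) * mul_inv_cancel₀ hHne
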